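/- For all real parameters α, β, the coefficient functions Ā(τ,σ) = 1/6 + (τ − σ)/2 + α·P_1(τ)·P_1(σ) + β·(P_2(τ) + P_2(σ)), B̄(τ) = 1 − τ, B̂(τ) = 1, C(τ) = τ satisfy (1) the symplectic conditions: B̂(τ)(1 − C(τ)) = B̄(τ) for all τ ∈ [0,1] and B̂(τ)(B̄(σ) − Ā(τ,σ)) = B̂(σ)(B̄(τ) − Ā(σ,τ)) for all τ, σ ∈ [0,1]; and (2) the order conditions ∫₀¹∫₀¹ Ā(τ,σ) dσ dτ = 1/6, ∫₀¹∫₀¹ τ·Ā(τ,σ) dσ dτ = 1/8, and ∫₀¹∫₀¹ Ā(τ,σ)·σ dσ dτ = 1/24. -/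

import Mathlib

open intervalIntegral

noncomputable def legP (n : ℕ) (x : ℝ) : ℝ :=
  Real.sqrt (2 * n + 1) / n.factorial *
    iteratedDeriv n (fun t : ℝ => t ^ n * (t - 1) ^ n) x

lemma legP1 (x : ℝ) : legP 1 x = Real.sqrt 3 * (2 * x - 1) := by
  have h : (fun t : ℝ => t ^ 1 * (t - 1) ^ 1) = fun t => t ^ 2 - t := by funext t; ring
  have hd : ∀ y : ℝ, HasDerivAt (fun t : ℝ => t ^ 2 - t) (2 * y - 1) y := by
    intro y
    have := (hasDerivAt_pow 2 y).sub (hasDerivAt_id y)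
    simpa [Pi.sub_def] using this
  simp only [legP, h, iteratedDeriv_one]
  rw [(hd x).deriv]
  norm_num

lemma legP2 (x : ℝ) : legP 2 x = Real.sqrt 5 * (6 * x ^ 2 - 6 * x + 1) := by
  have h : (fun t : ℝ => t ^ 2 * (t - 1) ^ 2) = fun t => t ^ 4 - 2 * t ^ 3 + t ^ 2 := by
    funext t; ring
  have hd : ∀ y : ℝ, HasDerivAt (fun t : ℝ => t ^ 4 - 2 * t ^ 3 + t ^ 2)
      (4 * y ^ 3 - 6 * y ^ 2 + 2 * y) y := by
    intro y
    have := ((hasDerivAt_pow 4 y).sub ((hasDerivAt_pow 3 y).const_mul 2)).add (hasDerivAt_pow 2 y)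
    simp only [Pi.add_def, Pi.sub_def, id] at this
    exact this.congr_deriv (by norm_num <;> ring)
  have hd2 : ∀ y : ℝ, HasDerivAt (fun t : ℝ => 4 * t ^ 3 - 6 * t ^ 2 + 2 * t)
      (12 * y ^ 2 - 12 * y + 2) y := by
    intro y
    have := (((hasDerivAt_pow 3 y).const_mul 4).sub ((hasDerivAt_pow 2 y).const_mul 6)).add
      ((hasDerivAt_id y).const_mul 2)
    simp only [Pi.add_def, Pi.sub_def, id] at this
    exact this.congr_deriv (by norm_num <;> ring)
  have hderiv : deriv (fun t : ℝ => t ^ 4 - 2 * t ^ 3 + t ^ 2)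
      = fun y => 4 * y ^ 3 - 6 * y ^ 2 + 2 * y := by
    funext y; exact (hd y).deriv
  simp only [legP, h, iteratedDeriv_succ, iteratedDeriv_zero]
  rw [show deriv (deriv (fun t : ℝ => t ^ 4 - 2 * t ^ 3 + t ^ 2)) x
      = 12 * x ^ 2 - 12 * x + 2 by rw [hderiv]; exact (hd2 x).deriv]
  norm_num
  ring

lemma cubint (a b c d : ℝ) :
    (∫ x in (0:ℝ)..1, (a + b * x + c * x ^ 2 + d * x ^ 3)) = a + b / 2 + c / 3 + d / 4 := by
  have h : ∀ (e : ℝ) (n : ℕ), (∫ x in (0:ℝ)..1, e * x ^ n) = e / (n + 1) := by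
    intro e n
    rw [intervalIntegral.integral_const_mul, integral_pow]
    ring
  have I : ∀ (e : ℝ) (n : ℕ), IntervalIntegrable (fun x : ℝ => e * x ^ n) MeasureTheory.volume 0 1 :=
    fun e n => (continuous_const.mul (continuous_pow n)).intervalIntegrable 0 1
  rw [show (fun x : ℝ => a + b * x + c * x ^ 2 + d * x ^ 3)
      = fun x => a * x ^ 0 + b * x ^ 1 + c * x ^ 2 + d * x ^ 3 by funext x; ring]
  rw [intervalIntegral.integral_add (((I a 0).add (I b 1)).add (I c 2)) (I d 3),
    intervalIntegral.integral_add ((I a 0).add (I b 1)) (I c 2),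
    intervalIntegral.integral_add (I a 0) (I b 1), h, h, h, h]
  norm_num
/-- The two-parameter family
`Ā(τ,σ) = 1/6 + (τ−σ)/2 + αP₁(τ)P₁(σ) + β(P₂(τ)+P₂(σ))`, `B̄(τ) = 1 − τ`, `B̂ = 1`,
`C(τ) = τ` satisfies the symplectic conditions and the fourth-order conditions. -/
theorem order4_family_symplectic
    (α β : ℝ) (A : ℝ → ℝ → ℝ)
    (hA : ∀ τ σ : ℝ, A τ σ =
      1 / 6 + (τ - σ) / 2 + α * legP 1 τ * legP 1 σ + β * (legP 2 τ + legP 2 σ))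
    (Bbar Bhat C : ℝ → ℝ)
    (hBbar : ∀ τ, Bbar τ = 1 - τ) (hBhat : ∀ τ, Bhat τ = 1) (hC : ∀ τ, C τ = τ) :
    ((∀ τ ∈ Set.Icc (0:ℝ) 1, Bhat τ * (1 - C τ) = Bbar τ) ∧
     (∀ τ ∈ Set.Icc (0:ℝ) 1, ∀ σ ∈ Set.Icc (0:ℝ) 1,
       Bhat τ * (Bbar σ - A τ σ) = Bhat σ * (Bbar τ - A σ τ))) ∧
    ((∫ τ in (0:ℝ)..1, ∫ σ in (0:ℝ)..1, A τ σ) = 1 / 6 ∧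
     (∫ τ in (0:ℝ)..1, ∫ σ in (0:ℝ)..1, τ * A τ σ) = 1 / 8 ∧
     (∫ τ in (0:ℝ)..1, ∫ σ in (0:ℝ)..1, A τ σ * σ) = 1 / 24) := by
  set s3 := Real.sqrt 3
  set s5 := Real.sqrt 5
  have h1 : ∀ τ : ℝ, (∫ σ in (0:ℝ)..1, A τ σ)
      = τ / 2 - 1 / 12 + β * (s5 * (6 * τ ^ 2 - 6 * τ + 1)) := by
    intro τ
    rw [show (fun σ => A τ σ) = fun σ =>
        (1 / 6 + τ / 2 - α * (s3 * (2 * τ - 1)) * s3 + β * (s5 * (6 * τ ^ 2 - 6 * τ + 1))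
          + β * s5)
        + (-(1 / 2) + α * (s3 * (2 * τ - 1)) * (2 * s3) - 6 * β * s5) * σ
        + (6 * β * s5) * σ ^ 2 + 0 * σ ^ 3 by
      funext σ; rw [hA, legP1, legP1, legP2, legP2]; ring, cubint]
    ring
  have h3 : ∀ τ : ℝ, (∫ σ in (0:ℝ)..1, A τ σ * σ)
      = τ / 4 - 1 / 12 + α * (s3 * (2 * τ - 1)) * s3 / 6
        + β * (s5 * (6 * τ ^ 2 - 6 * τ + 1)) / 2 := by
    intro τ
    rw [show (fun σ => A τ σ * σ) = fun σ => (0 : ℝ)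
        + (1 / 6 + τ / 2 - α * (s3 * (2 * τ - 1)) * s3 + β * (s5 * (6 * τ ^ 2 - 6 * τ + 1))
          + β * s5) * σ
        + (-(1 / 2) + α * (s3 * (2 * τ - 1)) * (2 * s3) - 6 * β * s5) * σ ^ 2
        + (6 * β * s5) * σ ^ 3 by
      funext σ; rw [hA, legP1, legP1, legP2, legP2]; ring, cubint]
    ring
  refine ⟨⟨fun τ _ => by rw [hBhat, hBbar, hC, one_mul],
      fun τ _ σ _ => by rw [hBhat, hBhat, hA, hA, hBbar, hBbar]; ring⟩, ?_, ?_, ?_⟩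
  · simp only [h1]
    rw [show (fun τ : ℝ => τ / 2 - 1 / 12 + β * (s5 * (6 * τ ^ 2 - 6 * τ + 1)))
        = fun τ : ℝ => (-(1 / 12) + β * s5) + (1 / 2 - 6 * β * s5) * τ
          + (6 * β * s5) * τ ^ 2 + 0 * τ ^ 3 by funext τ; ring, cubint]
    ring
  · simp only [intervalIntegral.integral_const_mul, h1]
    rw [show (fun τ : ℝ => τ * (τ / 2 - 1 / 12 + β * (s5 * (6 * τ ^ 2 - 6 * τ + 1))))
        = fun τ : ℝ => (0 : ℝ) + (-(1 / 12) + β * s5) * τ + (1 / 2 - 6 * β * s5) * τ ^ 2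
          + (6 * β * s5) * τ ^ 3 by funext τ; ring, cubint]
    ring
  · simp only [h3]
    rw [show (fun τ : ℝ => τ / 4 - 1 / 12 + α * (s3 * (2 * τ - 1)) * s3 / 6
          + β * (s5 * (6 * τ ^ 2 - 6 * τ + 1)) / 2)
        = fun τ : ℝ => (-(1 / 12) - α * s3 * s3 / 6 + β * s5 / 2)
          + (1 / 4 + α * s3 * s3 / 3 - 3 * β * s5) * τ + (3 * β * s5) * τ ^ 2 + 0 * τ ^ 3 by
        funext τ; ring, cubint]
    ring
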